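/- Let G(u) = u + u^2 - 2u^3, H = G', ρ < 1/6, ρ* = (1-2ρ)/4 < λ ≤ 1. If γ is a probability measure on [ρ, λ] and u > H(ρ*) satisfies u·∫(α - ρ) dγ(α) ≤ ∫(G(α) - G(ρ)) dγ(α), then γ is the Dirac measure at ρ. -/
import Mathlib


open MeasureTheory

theorem stmt_12 (G H : ℝ → ℝ) (hG : ∀ u, G u = u + u^2 - 2*u^3)
    (hH : ∀ u, H u = 1 + 2*u - 6*u^2)
    (ρ lam u : ℝ) (hρ0 : 0 ≤ ρ) (hρ : ρ < 1/6)
    (hstar : (1 - 2*ρ)/4 < lam) (hlam : lam ≤ 1)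
    (γ : Measure ℝ) [IsProbabilityMeasure γ]
    (hsupp : γ (Set.Icc ρ lam)ᶜ = 0)
    (hu : H ((1 - 2*ρ)/4) < u)
    (hineq : u * ∫ α, (α - ρ) ∂γ ≤ ∫ α, (G α - G ρ) ∂γ) :
    γ = Measure.dirac ρ := by
  have hGc : Continuous G := by
    have : G = fun x : ℝ => x + x^2 - 2*x^3 := funext hG
    rw [this]; continuity
  have hae : ∀ᵐ α ∂γ, α ∈ Set.Icc ρ lam := by
    rw [ae_iff]; exact hsupp
  -- bound for G on the compact interval
  obtain ⟨C, hC⟩ : ∃ C, ∀ x ∈ Set.Icc ρ lam, ‖G x‖ ≤ C :=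
    isCompact_Icc.exists_bound_of_continuousOn hGc.continuousOn
  have hint1 : Integrable (fun α => α - ρ) γ := by
    refine Integrable.mono' (integrable_const (lam - ρ)) ?_ ?_
    · exact (continuous_id.sub continuous_const).aestronglyMeasurable
    · filter_upwards [hae] with α hα
      rw [Real.norm_eq_abs, abs_le]
      constructor <;> [linarith [hα.1]; linarith [hα.2]]
  have hint2 : Integrable (fun α => G α - G ρ) γ := by
    refine Integrable.mono' (integrable_const (C + ‖G ρ‖)) ?_ ?_
    · exact (hGc.sub continuous_const).aestronglyMeasurable
    · filter_upwards [hae] with α hα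
      calc ‖G α - G ρ‖ ≤ ‖G α‖ + ‖G ρ‖ := norm_sub_le _ _
        _ ≤ C + ‖G ρ‖ := by linarith [hC α hα]
  set h : ℝ := 1 + 2*((1 - 2*ρ)/4) - 6*((1 - 2*ρ)/4)^2 with hh
  have hu' : h < u := by rw [hH] at hu; exact hu
  -- pointwise inequality
  have hpt : ∀ᵐ α ∂γ, G α - G ρ ≤ h * (α - ρ) := by
    filter_upwards [hae] with α hα
    rw [hG, hG, hh]
    nlinarith [mul_nonneg (sub_nonneg.2 hα.1) (sq_nonneg (α - (1 - 2*ρ)/4)), hα.1]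
  have hInt : ∫ α, (G α - G ρ) ∂γ ≤ h * ∫ α, (α - ρ) ∂γ := by
    rw [← integral_const_mul]
    exact integral_mono_ae hint2 (hint1.const_mul h) hpt
  have h0 : 0 ≤ᵐ[γ] fun α => α - ρ := by
    filter_upwards [hae] with α hα
    simp only [Pi.zero_apply]; linarith [hα.1]
  have hInonneg : 0 ≤ ∫ α, (α - ρ) ∂γ := integral_nonneg_of_ae h0
  have hIzero : ∫ α, (α - ρ) ∂γ = 0 := by
    by_contra hne
    have hpos : 0 < ∫ α, (α - ρ) ∂γ := lt_of_le_of_ne hInonneg (Ne.symm hne)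
    nlinarith
  have hzero := (integral_eq_zero_iff_of_nonneg_ae h0 hint1).mp hIzero
  have haeρ : ∀ᵐ α ∂γ, α = ρ := by
    filter_upwards [hzero] with α hα
    simp only [Pi.zero_apply] at hα; linarith [hα]
  -- conclude γ = dirac ρ
  have hmap : γ = Measure.map (fun _ => ρ) γ := by
    have h2 := Measure.map_congr (μ := γ) (mβ := Real.measurableSpace) (f := (id : ℝ → ℝ)) (g := fun _ => ρ)
      (by filter_upwards [haeρ] with α hα; simpa using hα)
    rw [Measure.map_id] at h2
    exact h2
  rw [hmap, Measure.map_const]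
  simp
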